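/- (Geometric form of Taylor's lemma) Let Ω be a homotopy functor from Zᵗ(Top) to a category D. Let (f,ζ) : (X,Λ_X) → (Y,Λ_Y) be a morphism in Zᵗ(Top) with X path-connected, and suppose F : X×[0,1] → Y is a continuous map with F∘ι₀ = F∘ι₁ = f. Fix x ∈ X and let L be the loop t ↦ F(x,t) in Y. If Λ_Y(L) = -1, then Ω(f,ζ) = Ω(f,ζ) ∘ Ω(1_X, -1_{Λ_X}), where (1_X, -1_{Λ_X}) is the endomorphism of (X,Λ_X) given by the identity map of X and the constant function -1. If instead Λ_Y(L) = +1, then this composite identity holds with the constant function +1, i.e. trivially. -/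

import Mathlib

open unitInterval CategoryTheory

structure ZtSystem (X : Type*) [TopologicalSpace X] where
  val : ∀ {x y : X}, Path x y → ℤˣ
  homotopic_eq : ∀ {x y : X} {γ γ' : Path x y}, Path.Homotopic γ γ' → val γ = val γ'
  refl_eq : ∀ x : X, val (Path.refl x) = 1
  trans_eq : ∀ {x y z : X} (γ : Path x y) (δ : Path y z), val (γ.trans δ) = val γ * val δ

def ZtSystem.IsMorphism {X : Type*} [TopologicalSpace X] (Λ₀ Λ₁ : ZtSystem X)
    (ζ : X → ℤˣ) : Prop :=
  ∀ {x y : X} (γ : Path x y), Λ₀.val γ * Λ₁.val γ = ζ x * ζ y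

def ZtSystem.pullback {X Y : Type*} [TopologicalSpace X] [TopologicalSpace Y]
    (f : C(X, Y)) (Λ : ZtSystem Y) : ZtSystem X where
  val γ := Λ.val (γ.map f.continuous)
  homotopic_eq h := Λ.homotopic_eq (h.map f)
  refl_eq x := by
    show Λ.val ((Path.refl x).map f.continuous) = 1
    rw [show (Path.refl x).map f.continuous = Path.refl (f x) from Path.ext rfl]
    exact Λ.refl_eq _
  trans_eq γ δ := by
    show Λ.val ((γ.trans δ).map f.continuous) = _
    rw [Path.map_trans]
    exact Λ.trans_eq _ _

/-- An object of the category `Zᵗ(Top)`: a space together with a `ℤᵗ`-system. -/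
structure ZtTop where
  carrier : Type*
  [inst : TopologicalSpace carrier]
  lam : ZtSystem carrier

attribute [instance] ZtTop.inst

/-- A morphism in `Zᵗ(Top)`. -/
@[ext]
structure ZtHom (A B : ZtTop) where
  f : C(A.carrier, B.carrier)
  ζ : A.carrier → ℤˣ
  isMor : ZtSystem.IsMorphism A.lam (ZtSystem.pullback f B.lam) ζ

instance : Category ZtTop where
  Hom := ZtHom
  id A := { f := ContinuousMap.id _, ζ := fun _ => 1,
            isMor := by
              intro x y γ
              show A.lam.val γ * A.lam.val (γ.map continuous_id) = 1 * 1
              rw [Path.map_id, Int.units_mul_self, one_mul] }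
  comp {A B C} u v :=
    { f := v.f.comp u.f
      ζ := fun x => v.ζ (u.f x) * u.ζ x
      isMor := by
        intro x y γ
        have h1 : A.lam.val γ * B.lam.val (γ.map u.f.continuous) = u.ζ x * u.ζ y := u.isMor γ
        have h2 : B.lam.val (γ.map u.f.continuous) *
            C.lam.val ((γ.map u.f.continuous).map v.f.continuous) =
            v.ζ (u.f x) * v.ζ (u.f y) := v.isMor (γ.map u.f.continuous)
        show A.lam.val γ * C.lam.val (γ.map (v.f.comp u.f).continuous) = _
        have hmap : γ.map (v.f.comp u.f).continuous
            = (γ.map u.f.continuous).map v.f.continuous := by rw [Path.map_map]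
        rw [hmap]
        have hb : B.lam.val (γ.map u.f.continuous) * B.lam.val (γ.map u.f.continuous) = 1 :=
          Int.units_mul_self _
        calc A.lam.val γ * C.lam.val ((γ.map u.f.continuous).map v.f.continuous)
            = (A.lam.val γ * B.lam.val (γ.map u.f.continuous)) *
              (B.lam.val (γ.map u.f.continuous) *
                C.lam.val ((γ.map u.f.continuous).map v.f.continuous)) := by
              rw [mul_assoc (A.lam.val γ), ← mul_assoc (B.lam.val (γ.map u.f.continuous))
                (B.lam.val (γ.map u.f.continuous)), hb, one_mul]
          _ = (u.ζ x * u.ζ y) * (v.ζ (u.f x) * v.ζ (u.f y)) := by rw [h1, h2]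
          _ = v.ζ (u.f x) * u.ζ x * (v.ζ (u.f y) * u.ζ y) := by
              rw [mul_mul_mul_comm, mul_comm (u.ζ x), mul_comm (u.ζ y)] }
  id_comp u := ZtHom.ext (ContinuousMap.comp_id _) (funext fun x => mul_one _)
  comp_id u := ZtHom.ext (ContinuousMap.id_comp _) (funext fun x => one_mul _)
  assoc u v w := ZtHom.ext rfl (funext fun x => (mul_assoc _ _ _).symm)

/-- The `ℤᵗ`-system `Λ • θ_{[0,1]}` on `X × [0,1]`. -/
def ZtSystem.prodI {X : Type*} [TopologicalSpace X] (Λ : ZtSystem X) :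
    ZtSystem (X × I) :=
  ZtSystem.pullback ⟨Prod.fst, continuous_fst⟩ Λ

/-- The path `s ↦ (x, s·t)` in `X × [0,1]` from `(x,0)` to `(x,t)`. -/
def Path.seg {X : Type*} [TopologicalSpace X] (x : X) (t : I) :
    Path ((x, 0) : X × I) (x, t) where
  toFun s := (x, ⟨s.1 * t.1, unitInterval.mul_mem s.2 t.2⟩)
  continuous_toFun := by fun_prop
  source' := by
    refine Prod.ext rfl (Subtype.ext ?_)
    simp
  target' := by
    refine Prod.ext rfl (Subtype.ext ?_)
    simp

/-- The vertical path `t ↦ (x, t)` in `X × [0,1]` from `(x,0)` to `(x,1)`. -/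
def Path.vert {X : Type*} [TopologicalSpace X] (x : X) :
    Path ((x, 0) : X × I) (x, 1) where
  toFun t := (x, t)
  continuous_toFun := by fun_prop
  source' := rfl
  target' := rfl

/-- The object `(X × [0,1], Λ • θ_{[0,1]})` of `Zᵗ(Top)`. -/
def ZtTop.prodI (A : ZtTop) : ZtTop :=
  { carrier := A.carrier × I, lam := A.lam.prodI }

/-- The end inclusion `(ι_t, 1_Λ) : (X,Λ) → (X × [0,1], Λ • θ_{[0,1]})`. -/
def ZtTop.iota (A : ZtTop) (t : I) : A ⟶ A.prodI where
  f := ⟨fun x => (x, t), by fun_prop⟩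
  ζ := fun _ => 1
  isMor := by
    intro x y γ
    show A.lam.val γ * A.lam.prodI.val (γ.map _) = 1 * 1
    have : A.lam.prodI.val (γ.map (Continuous.prodMk (f := fun x : A.carrier => x)
        (g := fun _ : A.carrier => t) continuous_id continuous_const)) = A.lam.val γ := by
      show A.lam.val ((γ.map _).map _) = _
      rw [Path.map_map]
      congr 1
    rw [this, Int.units_mul_self, one_mul]

/-- The projection `(r, 1) : (X × [0,1], Λ • θ_{[0,1]}) → (X,Λ)`. -/
def ZtTop.proj (A : ZtTop) : A.prodI ⟶ A where
  f := ⟨Prod.fst, continuous_fst⟩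
  ζ := fun _ => 1
  isMor := by
    intro p q μ
    show A.lam.prodI.val μ * A.lam.val (μ.map continuous_fst) = 1 * 1
    show A.lam.val (μ.map continuous_fst) * A.lam.val (μ.map continuous_fst) = 1 * 1
    rw [Int.units_mul_self, one_mul]

/-- A homotopy functor on `Zᵗ(Top)`. -/
def IsHomotopyFunctor {D : Type*} [Category D] (Ω : Functor ZtTop D) : Prop :=
  ∀ A : ZtTop, Ω.map (A.proj) ≫ Ω.map (A.iota 0) = 𝟙 (Ω.obj A.prodI)

/-- The endomorphism `(1_X, -1_Λ)` of `(X, Λ)`. -/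
def ZtTop.negId (A : ZtTop) : A ⟶ A where
  f := ContinuousMap.id _
  ζ := fun _ => -1
  isMor := by
    intro x y γ
    show A.lam.val γ * A.lam.val (γ.map continuous_id) = (-1 : ℤˣ) * (-1 : ℤˣ)
    rw [Path.map_id, Int.units_mul_self, neg_mul_neg, one_mul]

/-- The involution on `Zᵗ(Top)`: `(f, ζ) ↦ (f, -ζ)`. -/
def ZtHom.neg {A B : ZtTop} (u : A ⟶ B) : A ⟶ B where
  f := u.f
  ζ := fun x => -(u.ζ x)
  isMor := by
    intro x y γ
    rw [neg_mul_neg]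
    exact u.isMor γ


instance : ContractibleSpace I :=
  (convex_Icc (0:ℝ) 1).contractibleSpace (Set.nonempty_Icc.mpr zero_le_one)

theorem ZtSystem.val_congr {X : Type*} [TopologicalSpace X] (Λ : ZtSystem X)
    {x y x' y' : X} (hx : x = x') (hy : y = y')
    (γ : Path x y) (γ' : Path x' y') (h : ∀ t, γ t = γ' t) : Λ.val γ = Λ.val γ' := by
  subst hx; subst hy
  congr 1
  exact Path.ext (funext h)

theorem homotopic_prodI_aux {X : Type*} [TopologicalSpace X] {p q : X × I}
    (μ ν : Path p q)
    (h : (μ.map continuous_fst).Homotopic (ν.map continuous_fst)) :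
    μ.Homotopic ν := by
  have h2 : (μ.map continuous_snd).Homotopic (ν.map continuous_snd) :=
    SimplyConnectedSpace.paths_homotopic _ _
  have h3 : ((μ.map continuous_fst).prod (μ.map continuous_snd)).Homotopic
      ((ν.map continuous_fst).prod (ν.map continuous_snd)) :=
    Nonempty.map2 Path.Homotopic.prodHomotopy h h2
  have e1 : (μ.map continuous_fst).prod (μ.map continuous_snd) = μ := Path.ext rfl
  have e2 : (ν.map continuous_fst).prod (ν.map continuous_snd) = ν := Path.ext rfl
  rwa [e1, e2] at h3

theorem homotopic_reflTrans_transRefl {X : Type*} [TopologicalSpace X] {a b : X}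
    (p : Path a b) : ((Path.refl a).trans p).Homotopic (p.trans (Path.refl b)) :=
  Path.Homotopic.trans (⟨Path.Homotopy.reflTrans p⟩ : Path.Homotopic _ _)
    (Path.Homotopic.symm ⟨Path.Homotopy.transRefl p⟩)

private theorem zu_key (u₁ u₂ u₃ u₄ u₅ u₆ u₇ : ℤˣ)
    (h1 : u₃ * u₂ = u₄ * u₅) (h2 : u₁ * u₄ = u₆ * u₇) :
    u₁ * u₂ = (u₆ * u₃) * (u₇ * u₅) := by
  rcases Int.units_eq_one_or u₁ with rfl|rfl <;>
  rcases Int.units_eq_one_or u₂ with rfl|rfl <;>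
  rcases Int.units_eq_one_or u₃ with rfl|rfl <;>
  rcases Int.units_eq_one_or u₄ with rfl|rfl <;>
  rcases Int.units_eq_one_or u₅ with rfl|rfl <;>
  rcases Int.units_eq_one_or u₆ with rfl|rfl <;>
  rcases Int.units_eq_one_or u₇ with rfl|rfl <;>
  (revert h1 h2; decide)

private theorem zu2 (a b e : ℤˣ) (h : a * e = e * b) : b = a := by
  rcases Int.units_eq_one_or a with rfl|rfl <;>
  rcases Int.units_eq_one_or b with rfl|rfl <;>
  rcases Int.units_eq_one_or e with rfl|rfl <;> (revert h; decide)

/-- The homotopy `F`, upgraded to a morphism `(X × I, Λ • θ) ⟶ (Y, Λ_Y)` in `Zᵗ(Top)`. -/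
def ZtHom.homotopyMor {A B : ZtTop} (m : A ⟶ B) (F : C(A.carrier × I, B.carrier))
    (hF0 : ∀ x : A.carrier, F (x, 0) = ZtHom.f m x) : A.prodI ⟶ B where
  f := F
  ζ := fun p => ZtHom.ζ m p.1 * B.lam.val ((Path.seg p.1 p.2).map F.continuous)
  isMor := by
    rintro (p : A.carrier × I) (q : A.carrier × I) (μ : @Path (A.carrier × I) _ p q)
    set γ : Path p.1 q.1 := μ.map continuous_fst with hγ
    have hα : (((Path.seg p.1 p.2).trans μ).map continuous_fst).Homotopic
        ((((γ.prod (Path.refl (0:I))).trans (Path.seg q.1 q.2)) :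
          Path ((p.1, 0) : A.carrier × I) q).map continuous_fst) := by
      have e1 : ((Path.seg p.1 p.2).trans μ).map
          (continuous_fst : Continuous (Prod.fst : A.carrier × I → A.carrier))
          = (Path.refl p.1).trans γ := by
        rw [Path.map_trans]
        congr 1
      have e2 : (((γ.prod (Path.refl (0:I))).trans (Path.seg q.1 q.2)) :
          Path ((p.1, 0) : A.carrier × I) q).map
          (continuous_fst : Continuous (Prod.fst : A.carrier × I → A.carrier))
          = γ.trans (Path.refl q.1) := by
        rw [Path.map_trans]
        congr 1
      rw [e1, e2]
      exact homotopic_reflTrans_transRefl γ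
    have hαβ : ((Path.seg p.1 p.2).trans μ).Homotopic
        (((γ.prod (Path.refl (0:I))).trans (Path.seg q.1 q.2)) :
          Path ((p.1, 0) : A.carrier × I) q) :=
      homotopic_prodI_aux _ _ hα
    have hval : B.lam.val (((Path.seg p.1 p.2).trans μ).map F.continuous)
        = B.lam.val ((((γ.prod (Path.refl (0:I))).trans (Path.seg q.1 q.2)) :
            Path ((p.1, 0) : A.carrier × I) q).map F.continuous) :=
      B.lam.homotopic_eq (hαβ.map F)
    have hA : B.lam.val (((Path.seg p.1 p.2).trans μ).map F.continuous)
        = B.lam.val ((Path.seg p.1 p.2).map F.continuous) * B.lam.val (μ.map F.continuous) := by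
      rw [Path.map_trans]; exact B.lam.trans_eq _ _
    have hB : B.lam.val ((((γ.prod (Path.refl (0:I))).trans (Path.seg q.1 q.2)) :
          Path ((p.1, 0) : A.carrier × I) q).map F.continuous)
        = B.lam.val ((γ.prod (Path.refl (0:I))).map F.continuous)
          * B.lam.val ((Path.seg q.1 q.2).map F.continuous) := by
      rw [Path.map_trans]; exact B.lam.trans_eq _ _
    have hbot : B.lam.val ((γ.prod (Path.refl (0:I))).map F.continuous)
        = B.lam.val (γ.map (ZtHom.f m).continuous) :=
      B.lam.val_congr (hF0 p.1) (hF0 q.1) _ _ (fun t => hF0 (γ t))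
    have h1 : B.lam.val ((Path.seg p.1 p.2).map F.continuous) * B.lam.val (μ.map F.continuous)
        = B.lam.val (γ.map (ZtHom.f m).continuous)
          * B.lam.val ((Path.seg q.1 q.2).map F.continuous) := by
      rw [← hA, hval, hB, hbot]
    have h2 : A.lam.val γ * B.lam.val (γ.map (ZtHom.f m).continuous)
        = ZtHom.ζ m p.1 * ZtHom.ζ m q.1 := ZtHom.isMor m γ
    exact zu_key _ _ _ _ _ _ _ h1 h2

theorem iota_comp_proj (A : ZtTop) (t : I) : A.iota t ≫ A.proj = 𝟙 A :=
  ZtHom.ext rfl (funext fun _ => mul_one 1)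

open CategoryTheory in
/-- Geometric form of Taylor's lemma: if `Ω` is a homotopy functor,
`(f,ζ) : (X,Λ_X) → (Y,Λ_Y)` with `X` path connected, `F` is a self-homotopy of
`f` and `L` is the loop `t ↦ F(x,t)`, then `Ω(f,ζ) = Ω(f,ζ) ∘ Ω(1_X, -1)` when
`Λ_Y(L) = -1`, and trivially `Ω(f,ζ) = Ω(f,ζ) ∘ Ω(1_X, 1)` when `Λ_Y(L) = 1`. -/
theorem taylors_lemma_geometric {D : Type*} [Category D]
    (Ω : Functor ZtTop D) (hΩ : IsHomotopyFunctor Ω)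
    (A B : ZtTop) [PathConnectedSpace A.carrier] (m : A ⟶ B)
    (F : C(A.carrier × I, B.carrier))
    (hF0 : ∀ x : A.carrier, F (x, 0) = ZtHom.f m x)
    (hF1 : ∀ x : A.carrier, F (x, 1) = ZtHom.f m x)
    (x : A.carrier) :
    (B.lam.val (((Path.vert x).map F.continuous).cast (hF0 x).symm (hF1 x).symm) = -1 →
      Ω.map A.negId ≫ Ω.map m = Ω.map m) ∧
    (B.lam.val (((Path.vert x).map F.continuous).cast (hF0 x).symm (hF1 x).symm) = 1 →
      Ω.map (𝟙 A) ≫ Ω.map m = Ω.map m) := by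
  have hseg0 : ∀ y : A.carrier,
      B.lam.val ((Path.seg y 0).map F.continuous) = 1 := by
    intro y
    have e : (Path.seg y 0).map F.continuous = Path.refl (F (y, 0)) :=
      Path.ext (funext fun s => congrArg F (Prod.ext rfl (Subtype.ext (mul_zero _))))
    rw [e, B.lam.refl_eq]
  have hseg1 : ∀ y : A.carrier,
      B.lam.val ((Path.seg y 1).map F.continuous)
        = B.lam.val ((Path.vert y).map F.continuous) := by
    intro y
    refine B.lam.val_congr rfl rfl _ _ (fun s => congrArg F ?_)
    exact Prod.ext rfl (Subtype.ext (mul_one _))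
  -- transfer of the loop value along path-connectedness
  have hvert : ∀ y : A.carrier,
      B.lam.val ((Path.vert y).map F.continuous)
        = B.lam.val ((Path.vert x).map F.continuous) := by
    intro y
    obtain ⟨γ⟩ := PathConnectedSpace.joined x y
    have hα : (((Path.vert x).trans (γ.prod (Path.refl (1:I)))).map continuous_fst).Homotopic
        ((((γ.prod (Path.refl (0:I))).trans (Path.vert y)) :
          Path ((x, 0) : A.carrier × I) (y, 1)).map continuous_fst) := by
      have e1 : ((Path.vert x).trans (γ.prod (Path.refl (1:I)))).map
          (continuous_fst : Continuous (Prod.fst : A.carrier × I → A.carrier))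
          = (Path.refl x).trans γ := by
        rw [Path.map_trans]; congr 1
      have e2 : (((γ.prod (Path.refl (0:I))).trans (Path.vert y)) :
          Path ((x, 0) : A.carrier × I) (y, 1)).map
          (continuous_fst : Continuous (Prod.fst : A.carrier × I → A.carrier))
          = γ.trans (Path.refl y) := by
        rw [Path.map_trans]; congr 1
      rw [e1, e2]
      exact homotopic_reflTrans_transRefl γ
    have hαβ := homotopic_prodI_aux _ _ hα
    have hval := B.lam.homotopic_eq (hαβ.map F)
    rw [Path.map_trans, Path.map_trans, B.lam.trans_eq, B.lam.trans_eq] at hval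
    have htop : B.lam.val ((γ.prod (Path.refl (1:I))).map F.continuous)
        = B.lam.val (γ.map (ZtHom.f m).continuous) :=
      B.lam.val_congr (hF1 x) (hF1 y) _ _ (fun t => hF1 (γ t))
    have hbot : B.lam.val ((γ.prod (Path.refl (0:I))).map F.continuous)
        = B.lam.val (γ.map (ZtHom.f m).continuous) :=
      B.lam.val_congr (hF0 x) (hF0 y) _ _ (fun t => hF0 (γ t))
    rw [htop, hbot] at hval
    exact zu2 _ _ _ hval
  have hcastval : B.lam.val (((Path.vert x).map F.continuous).cast (hF0 x).symm (hF1 x).symm)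
      = B.lam.val ((Path.vert x).map F.continuous) :=
    B.lam.val_congr (hF0 x).symm (hF1 x).symm _ _ (fun _ => rfl)
  have h01 : Ω.map (A.iota 1) = Ω.map (A.iota 0) := by
    have h1 : Ω.map (A.iota 1) ≫ Ω.map A.proj = 𝟙 (Ω.obj A) := by
      rw [← Ω.map_comp, iota_comp_proj, Ω.map_id]
    calc Ω.map (A.iota 1)
        = Ω.map (A.iota 1) ≫ (Ω.map A.proj ≫ Ω.map (A.iota 0)) := by
          rw [hΩ A, Category.comp_id]
      _ = (Ω.map (A.iota 1) ≫ Ω.map A.proj) ≫ Ω.map (A.iota 0) := by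
          rw [Category.assoc]
      _ = Ω.map (A.iota 0) := by rw [h1, Category.id_comp]
  constructor
  · intro hL
    have hLx : B.lam.val ((Path.vert x).map F.continuous) = -1 := by
      rw [← hcastval]; exact hL
    have hm0 : A.iota 0 ≫ ZtHom.homotopyMor m F hF0 = m := by
      refine ZtHom.ext (ContinuousMap.ext hF0) (funext fun y => ?_)
      show ZtHom.ζ m y * B.lam.val ((Path.seg y 0).map F.continuous) * 1 = ZtHom.ζ m y
      rw [hseg0 y, mul_one, mul_one]
    have hm1 : A.iota 1 ≫ ZtHom.homotopyMor m F hF0 = A.negId ≫ m := by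
      refine ZtHom.ext (ContinuousMap.ext hF1) (funext fun y => ?_)
      show ZtHom.ζ m y * B.lam.val ((Path.seg y 1).map F.continuous) * 1
          = ZtHom.ζ m y * (-1)
      rw [hseg1 y, hvert y, hLx, mul_one]
    calc Ω.map A.negId ≫ Ω.map m
        = Ω.map (A.negId ≫ m) := (Ω.map_comp _ _).symm
      _ = Ω.map (A.iota 1 ≫ ZtHom.homotopyMor m F hF0) := by rw [hm1]
      _ = Ω.map (A.iota 1) ≫ Ω.map (ZtHom.homotopyMor m F hF0) := Ω.map_comp _ _
      _ = Ω.map (A.iota 0) ≫ Ω.map (ZtHom.homotopyMor m F hF0) := by rw [h01]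
      _ = Ω.map (A.iota 0 ≫ ZtHom.homotopyMor m F hF0) := (Ω.map_comp _ _).symm
      _ = Ω.map m := by rw [hm0]
  · intro _
    rw [CategoryTheory.Functor.map_id, Category.id_comp]
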